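/- Consider the list schedule of a finite list of jobs with nonnegative sizes on m ≥ 1 machines with zero initial loads, and let F be its free time. Then for every τ ≥ F, the total size of the jobs in the list whose size is at most τ is at most m·(F + τ). -/
import Mathlib


/-- The machine of minimum load, ties broken by lowest machine index. -/
noncomputable def bestMachine {m : ℕ} (hm : 0 < m) (ℓ : Fin m → ℝ) : Fin m :=
  (Finset.univ.filter fun i => ∀ j, ℓ i ≤ ℓ j).min' (by
    obtain ⟨i, -, hi⟩ := Finset.exists_min_image Finset.univ ℓ ⟨⟨0, hm⟩, Finset.mem_univ _⟩
    exact ⟨i, Finset.mem_filter.mpr ⟨Finset.mem_univ _, fun j => hi j (Finset.mem_univ _)⟩⟩)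

/-- One step of list scheduling: assign a job of size `s` to the best machine. -/
noncomputable def schedStep {m : ℕ} (hm : 0 < m) (ℓ : Fin m → ℝ) (s : ℝ) : Fin m → ℝ :=
  Function.update ℓ (bestMachine hm ℓ) (ℓ (bestMachine hm ℓ) + s)

/-- Machine loads after list-scheduling `jobs` starting from initial loads `ℓ`. -/
noncomputable def loadsAfter {m : ℕ} (hm : 0 < m) (ℓ : Fin m → ℝ) : List ℝ → (Fin m → ℝ)
  | [] => ℓ
  | s :: rest => loadsAfter hm (schedStep hm ℓ s) rest

/-- The free time: minimum machine load after all jobs are assigned. -/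
noncomputable def freeTime {m : ℕ} (hm : 0 < m) (ℓ : Fin m → ℝ) (jobs : List ℝ) : ℝ :=
  Finset.univ.inf' ⟨⟨0, hm⟩, Finset.mem_univ _⟩ (loadsAfter hm ℓ jobs)

/-- Total completion time of the list schedule. -/
noncomputable def totalCompletion {m : ℕ} (hm : 0 < m) (ℓ : Fin m → ℝ) : List ℝ → ℝ
  | [] => 0
  | s :: rest => (ℓ (bestMachine hm ℓ) + s) + totalCompletion hm (schedStep hm ℓ s) rest

/-- The sequence of machines to which successive jobs are assigned. -/
noncomputable def assignSeq {m : ℕ} (hm : 0 < m) (ℓ : Fin m → ℝ) : List ℝ → List (Fin m)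
  | [] => []
  | s :: rest => bestMachine hm ℓ :: assignSeq hm (schedStep hm ℓ s) rest

/-- The optimal free time of a multiset of jobs: min over orderings, zero initial loads. -/
noncomputable def optFreeTime {m : ℕ} (hm : 0 < m) (J : Multiset ℝ) : ℝ :=
  sInf {F | ∃ l : List ℝ, (l : Multiset ℝ) = J ∧ F = freeTime hm (fun _ => 0) l}

/-- The optimal total completion time of a multiset of jobs: min over orderings. -/
noncomputable def optTotalCompletion {m : ℕ} (hm : 0 < m) (J : Multiset ℝ) : ℝ :=
  sInf {C | ∃ l : List ℝ, (l : Multiset ℝ) = J ∧ C = totalCompletion hm (fun _ => 0) l}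
lemma best_le {m : ℕ} (hm : 0 < m) (ℓ : Fin m → ℝ) (j : Fin m) :
    ℓ (bestMachine hm ℓ) ≤ ℓ j := by
  have h : bestMachine hm ℓ ∈ Finset.univ.filter fun i => ∀ j, ℓ i ≤ ℓ j :=
    Finset.min'_mem _ _
  rw [Finset.mem_filter] at h
  exact h.2 j

lemma le_schedStep {m : ℕ} (hm : 0 < m) (ℓ : Fin m → ℝ) {s : ℝ} (hs : 0 ≤ s) (i : Fin m) :
    ℓ i ≤ schedStep hm ℓ s i := by
  unfold schedStep
  rcases eq_or_ne i (bestMachine hm ℓ) with h | h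
  · subst h; rw [Function.update_self]; linarith
  · rw [Function.update_of_ne h]

lemma le_loadsAfter {m : ℕ} (hm : 0 < m) :
    ∀ (l : List ℝ), (∀ s ∈ l, 0 ≤ s) → ∀ (ℓ : Fin m → ℝ) (i : Fin m),
    ℓ i ≤ loadsAfter hm ℓ l i := by
  intro l
  induction l with
  | nil => intro _ ℓ i; simp [loadsAfter]
  | cons s rest ih =>
    intro hnn ℓ i
    have : ℓ i ≤ schedStep hm ℓ s i := le_schedStep hm ℓ (hnn s (by simp)) i
    calc ℓ i ≤ schedStep hm ℓ s i := this
      _ ≤ loadsAfter hm (schedStep hm ℓ s) rest i :=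
          ih (fun x hx => hnn x (by simp [hx])) _ i

lemma key_lemma {m : ℕ} (hm : 0 < m) (τ : ℝ) :
    ∀ (jobs : List ℝ), (∀ s ∈ jobs, 0 ≤ s) → ∀ ℓ : Fin m → ℝ,
    (jobs.filter (fun s => s ≤ τ)).sum ≤
      ∑ i, max 0 (freeTime hm ℓ jobs + τ - ℓ i) := by
  intro jobs
  induction jobs with
  | nil =>
    intro _ ℓ
    simp only [List.filter_nil, List.sum_nil]
    exact Finset.sum_nonneg fun i _ => le_max_left _ _
  | cons s rest ih =>
    intro hnn ℓ
    have hs : 0 ≤ s := hnn s (by simp)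
    have hrest : ∀ x ∈ rest, 0 ≤ x := fun x hx => hnn x (by simp [hx])
    set b := bestMachine hm ℓ with hb
    set ℓ' := schedStep hm ℓ s with hℓ'
    have hF : freeTime hm ℓ (s :: rest) = freeTime hm ℓ' rest := rfl
    have hIH := ih hrest ℓ'
    set F := freeTime hm ℓ' rest with hFdef
    have hle' : ∀ i, ℓ i ≤ ℓ' i := le_schedStep hm ℓ hs
    have hbℓ' : ∀ i, ℓ b ≤ ℓ' i := fun i => le_trans (best_le hm ℓ i) (hle' i)
    have hbF : ℓ b ≤ F := by
      rw [hFdef]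
      unfold freeTime
      apply Finset.le_inf'
      intro i _
      exact le_trans (hbℓ' i) (le_loadsAfter hm rest hrest ℓ' i)
    have hup : ∀ i, max 0 (F + τ - ℓ' i)
        = Function.update (fun i => max 0 (F + τ - ℓ i)) b (max 0 (F + τ - (ℓ b + s))) i := by
      intro i
      rcases eq_or_ne i b with h | h
      · subst h
        rw [Function.update_self, hℓ']
        unfold schedStep
        rw [← hb, Function.update_self]
      · rw [Function.update_of_ne h, hℓ']
        unfold schedStep
        rw [← hb, Function.update_of_ne h]
    have hsum' : ∑ i, max 0 (F + τ - ℓ' i)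
        = max 0 (F + τ - (ℓ b + s)) + (∑ i, max 0 (F + τ - ℓ i)) - max 0 (F + τ - ℓ b) := by
      rw [Finset.sum_congr rfl (fun i _ => hup i),
        Finset.sum_update_of_mem (Finset.mem_univ b), Finset.sdiff_singleton_eq_erase,
        Finset.sum_erase_eq_sub (Finset.mem_univ b)]
      ring
    by_cases hsτ : s ≤ τ
    · have hfc : (List.filter (fun s => decide (s ≤ τ)) (s :: rest)).sum
          = s + (List.filter (fun s => decide (s ≤ τ)) rest).sum := by
        rw [List.filter_cons, if_pos (by simpa using hsτ)]
        simp
      rw [hfc]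
      have h1 : s + max 0 (F + τ - (ℓ b + s)) ≤ max 0 (F + τ - ℓ b) := by
        have hτs : s ≤ F + τ - ℓ b := by linarith
        rcases le_total 0 (F + τ - (ℓ b + s)) with h | h
        · rw [max_eq_right h, max_eq_right (by linarith)]; linarith
        · rw [max_eq_left h, max_eq_right (by linarith)]; linarith
      calc s + (List.filter (fun s => decide (s ≤ τ)) rest).sum
          ≤ s + ∑ i, max 0 (F + τ - ℓ' i) := by linarith [hIH]
        _ ≤ ∑ i, max 0 (F + τ - ℓ i) := by rw [hsum']; linarith
    · have hfc : (List.filter (fun s => decide (s ≤ τ)) (s :: rest)).sum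
          = (List.filter (fun s => decide (s ≤ τ)) rest).sum := by
        rw [List.filter_cons, if_neg (by simpa using hsτ)]
      rw [hfc]
      refine le_trans hIH (Finset.sum_le_sum fun i _ => ?_)
      exact max_le_max le_rfl (by linarith [hle' i])

/-- for any τ ≥ F (the free time), the total size of jobs of
size at most τ is at most m·(F + τ). -/
theorem stmt10 (m : ℕ) (hm : 0 < m) (jobs : List ℝ) (hjobs : ∀ s ∈ jobs, 0 ≤ s)
    (τ : ℝ) (hτ : freeTime hm (fun _ => 0) jobs ≤ τ) :
    (jobs.filter (fun s => s ≤ τ)).sum ≤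
      (m : ℝ) * (freeTime hm (fun _ => 0) jobs + τ) := by
  have hkey := key_lemma hm τ jobs hjobs (fun _ => 0)
  set F := freeTime hm (fun _ => 0 : Fin m → ℝ) jobs with hFdef
  have hF0 : 0 ≤ F := by
    rw [hFdef]
    unfold freeTime
    apply Finset.le_inf'
    intro i _
    exact le_loadsAfter hm jobs hjobs (fun _ => 0) i
  have : ∑ i : Fin m, max 0 (F + τ - (0:ℝ)) = (m : ℝ) * (F + τ) := by
    rw [Finset.sum_const, Finset.card_univ, Fintype.card_fin, nsmul_eq_mul]
    congr 1
    rw [sub_zero, max_eq_right (by linarith)]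
  calc (jobs.filter (fun s => s ≤ τ)).sum ≤ ∑ i : Fin m, max 0 (F + τ - (0:ℝ)) := hkey
    _ = (m : ℝ) * (F + τ) := this
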